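/- arXiv:1208.0754 — 3 statements merged into one kernel-verified Lean document; each statement's English description precedes it below -/
import Mathlib

section
/- Let p be a real number and z > 0 a real number with p + ln z > 0. Set σ = 1/(p + ln z), τ = (p + ln(p + ln z))/(p + ln z), and u = W(z) − ln z + ln(p + ln z). Then 1 − exp(−u) + σ·u − τ = 0. (In particular, the fundamental relation 1 − e^{−u} + σu − τ = 0 is invariant under the one-parameter family of transformations indexed by p.) -/
/-- invariance of the fundamental relation `1 - e^{-u} + σu - τ = 0`
under the one-parameter family of transformations indexed by `p`.
Here `w = W(z)` is characterized as the unique real `w ≥ -1` with `w·exp w = z`. -/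
theorem stmt_0 (p z w : ℝ) (hz : 0 < z) (hpz : 0 < p + Real.log z)
    (hw1 : -1 ≤ w) (hw2 : w * Real.exp w = z) :
    1 - Real.exp (-(w - Real.log z + Real.log (p + Real.log z)))
      + (1 / (p + Real.log z)) * (w - Real.log z + Real.log (p + Real.log z))
      - (p + Real.log (p + Real.log z)) / (p + Real.log z) = 0 := by
  have hew := Real.exp_pos w
  have he : Real.exp (-(w - Real.log z + Real.log (p + Real.log z)))
      = w / (p + Real.log z) := by
    rw [show -(w - Real.log z + Real.log (p + Real.log z))
        = (-w) + Real.log z + (-(Real.log (p + Real.log z))) by ring,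
      Real.exp_add, Real.exp_add, Real.exp_neg, Real.exp_neg,
      Real.exp_log hz, Real.exp_log hpz, ← hw2]
    field_simp
  rw [he]
  field_simp
  ring
end

section
/- (Carlitz–Riordan identity.) For every integer n ≥ 1 and every real number λ: ∑_{k=0}^{n−1} E₂(n,k)·(1+λ)^{n−1−k}·λ^k = ∑_{k=1}^{n} S(n+k, k)·λ^{k−1}. -/
/-- Second-order Eulerian numbers: `E₂(0,0)=1`, `E₂(n,k)=0` if `n≥1` and `k≥n`, and
`E₂(n,k)=(k+1)·E₂(n−1,k)+(2n−1−k)·E₂(n−1,k−1)` for `n≥1`. -/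
def E2 : ℕ → ℕ → ℕ
  | 0, 0 => 1
  | 0, _ + 1 => 0
  | n + 1, 0 => E2 n 0
  | n + 1, k + 1 => (k + 2) * E2 n (k + 1) + (2 * n - k) * E2 n k

/-- 2-associated Stirling subset numbers: `S(0,0)=1`, `S(n,k)=0` if `n<2k` and
`(n,k)≠(0,0)`, and `S(n,k)=k·S(n−1,k)+(n−1)·S(n−2,k−1)` for `n≥1`. -/
def S2 : ℕ → ℕ → ℕ
  | 0, 0 => 1
  | 0, _ + 1 => 0
  | 1, _ => 0
  | _ + 2, 0 => 0
  | n + 2, k + 1 => (k + 1) * S2 (n + 1) (k + 1) + (n + 1) * S2 n k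

lemma S2_eq_zero : ∀ m k, m < 2 * k → S2 m k = 0
  | 0, k + 1, _ => rfl
  | 1, k, _ => rfl
  | m + 2, k + 1, h => by
      have h1 : S2 (m + 1) (k + 1) = 0 := S2_eq_zero (m + 1) (k + 1) (by omega)
      have h2 : S2 m k = 0 := by
        rcases k with _ | k
        · omega
        · exact S2_eq_zero m (k + 1) (by omega)
      rw [S2, h1, h2]; ring

lemma E2_eq_zero : ∀ n j, n ≤ j → E2 (n + 1) (j + 1) = 0
  | 0, j, _ => by rcases j with _ | j <;> simp [E2]
  | n + 1, j + 1, h => by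
      have h1 : E2 (n + 1) (j + 2) = 0 := E2_eq_zero n (j + 1) (by omega)
      have h2 : E2 (n + 1) (j + 1) = 0 := E2_eq_zero n j (by omega)
      rw [E2, h1, h2]; ring

lemma choose_id (a b j : ℕ) :
    (j + 1) * Nat.choose (a + 1) (b + 1) + (2 * a + j + 2) * Nat.choose a b
      = (b + j + 2) * Nat.choose a (b + 1) + (a + b + 2 * j + 3) * Nat.choose a b := by
  rcases le_or_gt b a with h | h
  · have h1 := Nat.choose_succ_right_eq a b
    rw [Nat.choose_succ_succ]
    zify [h] at h1 ⊢
    linear_combination (-1 : ℤ) * h1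
  · have hx : Nat.choose a (b + 1) = 0 := Nat.choose_eq_zero_of_lt (by omega)
    have hy : Nat.choose a b = 0 := Nat.choose_eq_zero_of_lt h
    have hz : Nat.choose (a + 1) (b + 1) = 0 := Nat.choose_eq_zero_of_lt (by omega)
    simp [hx, hy, hz]

lemma term_id (n j k : ℕ) (hn : 1 ≤ n) (hj : j < k) :
    (j + 1) * (E2 n j * Nat.choose (n - j) (k - j))
      + (2 * n - j) * (E2 n j * Nat.choose (n - 1 - j) (k - 1 - j))
    = (k + 1) * (E2 n j * Nat.choose (n - 1 - j) (k - j))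
      + (n + k + 1) * (E2 n j * Nat.choose (n - 1 - j) (k - 1 - j)) := by
  rcases Nat.lt_or_ge j n with hjn | hjn
  · obtain ⟨a, rfl⟩ : ∃ a, n = a + j + 1 := ⟨n - j - 1, by omega⟩
    obtain ⟨b, rfl⟩ : ∃ b, k = b + j + 1 := ⟨k - j - 1, by omega⟩
    have e1 : a + j + 1 - j = a + 1 := by omega
    have e2 : a + j + 1 - 1 - j = a := by omega
    have e3 : b + j + 1 - j = b + 1 := by omega
    have e4 : b + j + 1 - 1 - j = b := by omega
    have e5 : 2 * (a + j + 1) - j = 2 * a + j + 2 := by omega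
    rw [e1, e2, e3, e4, e5]
    set E := E2 (a + j + 1) j
    have h := choose_id a b j
    calc (j + 1) * (E * Nat.choose (a + 1) (b + 1)) + (2 * a + j + 2) * (E * Nat.choose a b)
        = E * ((j + 1) * Nat.choose (a + 1) (b + 1) + (2 * a + j + 2) * Nat.choose a b) := by ring
      _ = E * ((b + j + 2) * Nat.choose a (b + 1) + (a + b + 2 * j + 3) * Nat.choose a b) := by
            rw [h]
      _ = (b + j + 1 + 1) * (E * Nat.choose a (b + 1))
            + (a + j + 1 + (b + j + 1) + 1) * (E * Nat.choose a b) := by ring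
  · have hz : E2 n j = 0 := by
      obtain ⟨m, rfl⟩ : ∃ m, n = m + 1 := ⟨n - 1, by omega⟩
      obtain ⟨i, rfl⟩ : ∃ i, j = i + 1 := ⟨j - 1, by omega⟩
      exact E2_eq_zero m i (by omega)
    simp [hz]

lemma key (n : ℕ) (hn : 1 ≤ n) :
    ∀ k, S2 (n + k) k = ∑ j ∈ Finset.range k, E2 n j * Nat.choose (n - 1 - j) (k - 1 - j) := by
  induction n, hn using Nat.le_induction with
  | base =>
    intro k
    match k with
    | 0 => rfl
    | 1 => decide
    | m + 2 =>
      rw [S2_eq_zero (1 + (m + 2)) (m + 2) (by omega)]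
      symm
      apply Finset.sum_eq_zero
      intro j hj
      match j with
      | 0 => simp [Nat.choose_eq_zero_of_lt]
      | i + 1 => rw [E2_eq_zero 0 i (by omega)]; ring
  | succ n hn IH =>
    intro k
    match k with
    | 0 =>
      obtain ⟨m, rfl⟩ : ∃ m, n = m + 1 := ⟨n - 1, by omega⟩
      rfl
    | k + 1 =>
      have hrw : n + 1 + (k + 1) = (n + k) + 2 := by omega
      rw [hrw, S2]
      have h1 : n + k + 1 = n + (k + 1) := by omega
      rw [h1, IH (k + 1), IH k]
      -- now pure sum manipulation
      simp only [Nat.add_sub_cancel]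
      -- goal: (k+1) * ∑_{j<k+1} E2 n j * C(n-1-j) (k-j) + (n+(k+1)) * ∑_{j<k} E2 n j * C(n-1-j)(k-1-j)
      --     = ∑_{j<k+1} E2 (n+1) j * C(n+1-1-j) (k-j)
      have step1 : ∑ j ∈ Finset.range (k + 1), E2 (n + 1) j * Nat.choose (n - j) (k - j)
          = ∑ j ∈ Finset.range (k + 1), (j + 1) * (E2 n j * Nat.choose (n - j) (k - j))
            + ∑ i ∈ Finset.range k, (2 * n - i) * (E2 n i * Nat.choose (n - 1 - i) (k - 1 - i)) := by
        rw [Finset.sum_range_succ' (fun j => E2 (n + 1) j * Nat.choose (n - j) (k - j)) k,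
            Finset.sum_range_succ' (fun j => (j + 1) * (E2 n j * Nat.choose (n - j) (k - j))) k]
        have h0 : E2 (n + 1) 0 = E2 n 0 := rfl
        simp only [h0]
        rw [add_right_comm, ← Finset.sum_add_distrib]
        congr 1
        · apply Finset.sum_congr rfl
          intro i hi
          have hE : E2 (n + 1) (i + 1) = (i + 2) * E2 n (i + 1) + (2 * n - i) * E2 n i := rfl
          have e1 : n - (i + 1) = n - 1 - i := by omega
          have e2 : k - (i + 1) = k - 1 - i := by omega
          rw [hE, e1, e2]
          ring
        · ring
      rw [step1]
      rw [Finset.sum_range_succ (fun j => (j + 1) * (E2 n j * Nat.choose (n - j) (k - j))) k,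
          Finset.sum_range_succ (fun j => E2 n j * Nat.choose (n - 1 - j) (k - j)) k]
      have main : ∑ j ∈ Finset.range k, ((j + 1) * (E2 n j * Nat.choose (n - j) (k - j))
            + (2 * n - j) * (E2 n j * Nat.choose (n - 1 - j) (k - 1 - j)))
          = ∑ j ∈ Finset.range k, ((k + 1) * (E2 n j * Nat.choose (n - 1 - j) (k - j))
            + (n + k + 1) * (E2 n j * Nat.choose (n - 1 - j) (k - 1 - j))) := by
        apply Finset.sum_congr rfl
        intro j hj
        exact term_id n j k hn (Finset.mem_range.mp hj)
      rw [Finset.sum_add_distrib] at main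
      simp only [Nat.sub_self, Nat.choose_zero_right, mul_one] at *
      rw [Finset.sum_add_distrib] at main
      rw [mul_add, Finset.mul_sum, Finset.mul_sum]
      simp only [← add_assoc]
      omega


/-- Carlitz–Riordan identity: for `n ≥ 1` and real `λ`,
`∑_{k=0}^{n−1} E₂(n,k)·(1+λ)^{n−1−k}·λ^k = ∑_{k=1}^{n} S(n+k, k)·λ^{k−1}`. -/
theorem stmt_14 (n : ℕ) (hn : 1 ≤ n) (lam : ℝ) :
    ∑ k ∈ Finset.range n, (E2 n k : ℝ) * (1 + lam) ^ (n - 1 - k) * lam ^ k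
      = ∑ k ∈ Finset.Icc 1 n, (S2 (n + k) k : ℝ) * lam ^ (k - 1) := by
  have lhs_eq : ∑ k ∈ Finset.range n, (E2 n k : ℝ) * (1 + lam) ^ (n - 1 - k) * lam ^ k
      = ∑ k ∈ Finset.range n, ∑ m ∈ Finset.range n,
          (if k ≤ m then (E2 n k : ℝ) * (Nat.choose (n - 1 - k) (m - k) : ℝ) * lam ^ m else 0) := by
    refine Finset.sum_congr rfl fun k hk => ?_
    have hk' : k < n := Finset.mem_range.mp hk
    have h1 : ∑ m ∈ Finset.range n,
          (if k ≤ m then (E2 n k : ℝ) * (Nat.choose (n - 1 - k) (m - k) : ℝ) * lam ^ m else 0)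
        = ∑ m ∈ Finset.Ico k n, (E2 n k : ℝ) * (Nat.choose (n - 1 - k) (m - k) : ℝ) * lam ^ m := by
      rw [← Finset.sum_filter]
      congr 1
      ext m
      simp only [Finset.mem_filter, Finset.mem_range, Finset.mem_Ico]
      omega
    rw [h1, Finset.sum_Ico_eq_sum_range]
    rw [show n - k = n - 1 - k + 1 from by omega]
    rw [add_comm (1 : ℝ) lam, add_pow]
    rw [Finset.mul_sum, Finset.sum_mul]
    refine Finset.sum_congr rfl fun i hi => ?_
    rw [show k + i - k = i from by omega]
    rw [one_pow, pow_add]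
    ring
  rw [lhs_eq, Finset.sum_comm]
  have mid_eq : ∀ m ∈ Finset.range n,
      ∑ k ∈ Finset.range n,
          (if k ≤ m then (E2 n k : ℝ) * (Nat.choose (n - 1 - k) (m - k) : ℝ) * lam ^ m else 0)
        = (S2 (n + m + 1) (m + 1) : ℝ) * lam ^ m := by
    intro m hm
    have hm' : m < n := Finset.mem_range.mp hm
    have h1 : ∑ k ∈ Finset.range n,
          (if k ≤ m then (E2 n k : ℝ) * (Nat.choose (n - 1 - k) (m - k) : ℝ) * lam ^ m else 0)
        = ∑ k ∈ Finset.range (m + 1), (E2 n k : ℝ) * (Nat.choose (n - 1 - k) (m - k) : ℝ) * lam ^ m := by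
      rw [← Finset.sum_filter]
      congr 1
      ext k
      simp only [Finset.mem_filter, Finset.mem_range]
      omega
    rw [h1]
    have h2 := key n hn (m + 1)
    simp only [Nat.add_sub_cancel] at h2
    have h3 : (S2 (n + (m + 1)) (m + 1) : ℝ)
        = ∑ j ∈ Finset.range (m + 1), (E2 n j : ℝ) * (Nat.choose (n - 1 - j) (m - j) : ℝ) := by
      rw [h2]; push_cast; rfl
    rw [show n + m + 1 = n + (m + 1) from by omega, h3, Finset.sum_mul]
  rw [Finset.sum_congr rfl mid_eq]
  rw [← Finset.Ico_add_one_right_eq_Icc, Finset.sum_Ico_eq_sum_range]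
  rw [show n + 1 - 1 = n from by omega]
  refine Finset.sum_congr rfl fun i hi => ?_
  rw [show 1 + i - 1 = i from by omega, show n + (1 + i) = n + i + 1 from by omega,
      show 1 + i = i + 1 from by omega]
end

section
/- For every integer n ≥ 2 the following three real numbers are equal: A_n = (1/(1+ω₀)^{2n−1})·∑_{k=0}^{n−1} E₂(n−1,k)·(−1)^k·ω₀^{k+1}; B_n = ω₀·∑_{k=0}^{n−1} (−1)^{n+k−1}·d(n+k−1,k)/(1+ω₀)^{n+k}; C_n = ∑_{k=0}^{n−1} S(n+k−1,k)·(−1)^{k+1}·ω₀^k/(1+ω₀)^{n+k}. (These are the three representations, in terms of second-order Eulerian numbers, associated Stirling numbers of the first kind, and 2-associated Stirling subset numbers respectively, of n! times the n-th Taylor coefficient at t = 0 of W(e^t).) -/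
/-- Associated Stirling numbers of the first kind: `d(0,0)=1`, `d(n,k)=0` if `n<2k` and
`(n,k)≠(0,0)`, and `d(n,k)=(n−1)·d(n−1,k)+(n−1)·d(n−2,k−1)` for `n≥1`. -/
def dAssoc : ℕ → ℕ → ℕ
  | 0, 0 => 1
  | 0, _ + 1 => 0
  | 1, _ => 0
  | _ + 2, 0 => 0
  | n + 2, k + 1 => (n + 1) * dAssoc (n + 1) (k + 1) + (n + 1) * dAssoc n k

lemma E2_succ (n k : ℕ) : E2 (n+1) (k+1) = (k + 2) * E2 n (k + 1) + (2 * n - k) * E2 n k := rfl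
lemma dAssoc_succ (n k : ℕ) : dAssoc (n+2) (k+1) = (n + 1) * dAssoc (n + 1) (k + 1) + (n + 1) * dAssoc n k := rfl
lemma S2_succ (n k : ℕ) : S2 (n+2) (k+1) = (k + 1) * S2 (n + 1) (k + 1) + (n + 1) * S2 n k := rfl
lemma dAssoc_zero_r (n : ℕ) : dAssoc (n+1) 0 = 0 := by cases n <;> rfl
lemma S2_zero_r (n : ℕ) : S2 (n+1) 0 = 0 := by cases n <;> rfl

lemma E2_zero : ∀ n k : ℕ, n ≤ k → E2 (n+1) (k+1) = 0
  | 0, k, _ => by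
      rw [E2_succ]
      cases k with
      | zero => rfl
      | succ k => simp [E2]
  | n+1, k, h => by
      match k, h with
      | k+1, h =>
        rw [E2_succ, E2_zero n (k+1) (by omega), E2_zero n k (by omega)]
        simp

lemma dAssoc_zero : ∀ n k : ℕ, n < 2*k → dAssoc n k = 0
  | 0, k, h => by
      match k, h with
      | k+1, _ => rfl
  | 1, k, h => by
      match k, h with
      | k+1, _ => rfl
  | n+2, 0, h => by omega
  | n+2, k+1, h => by
      rw [dAssoc_succ, dAssoc_zero (n+1) (k+1) (by omega), dAssoc_zero n k (by omega)]
      simp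

lemma S2_zero : ∀ n k : ℕ, n < 2*k → S2 n k = 0
  | 0, k, h => by
      match k, h with
      | k+1, _ => rfl
  | 1, k, h => by
      match k, h with
      | k+1, _ => rfl
  | n+2, 0, h => by omega
  | n+2, k+1, h => by
      rw [S2_succ, S2_zero (n+1) (k+1) (by omega), S2_zero n k (by omega)]
      simp

noncomputable def Nf (n : ℕ) (x : ℝ) : ℝ :=
  ∑ k ∈ Finset.range (n+2), (-1:ℝ)^k * (E2 (n+1) k : ℝ) * x^(k+1)
noncomputable def Np (n : ℕ) (x : ℝ) : ℝ :=
  ∑ k ∈ Finset.range (n+2), (-1:ℝ)^k * (E2 (n+1) k : ℝ) * (((k:ℝ)+1) * x^k)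
noncomputable def Qf (n : ℕ) (x : ℝ) : ℝ :=
  ∑ k ∈ Finset.range (n+2), (-1:ℝ)^(n+k+1) * (dAssoc (n+k+1) k : ℝ) * (x * (1+x)^(n+1-k))
noncomputable def Qp (n : ℕ) (x : ℝ) : ℝ :=
  ∑ k ∈ Finset.range (n+2), (-1:ℝ)^(n+k+1) * (dAssoc (n+k+1) k : ℝ) *
    ((1+x)^(n+1-k) + x * (((n+1-k : ℕ):ℝ) * (1+x)^(n-k)))
noncomputable def Rf (n : ℕ) (x : ℝ) : ℝ :=
  ∑ k ∈ Finset.range (n+2), (-1:ℝ)^(k+1) * (S2 (n+k+1) k : ℝ) * (x^k * (1+x)^(n+1-k))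
noncomputable def Rp (n : ℕ) (x : ℝ) : ℝ :=
  ∑ k ∈ Finset.range (n+2), (-1:ℝ)^(k+1) * (S2 (n+k+1) k : ℝ) *
    (((k:ℝ) * x^(k-1)) * (1+x)^(n+1-k) + x^k * (((n+1-k:ℕ):ℝ) * (1+x)^(n-k)))

lemma hasDerivAt_one_add (x : ℝ) : HasDerivAt (fun y : ℝ => 1 + y) 1 x := by
  simpa using (hasDerivAt_id x).const_add 1

lemma hasDerivAt_Nf (n : ℕ) (x : ℝ) : HasDerivAt (fun y => Nf n y) (Np n x) x := by
  unfold Nf Np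
  refine HasDerivAt.fun_sum fun k _ => ?_
  have h := (hasDerivAt_pow (k+1) x).const_mul ((-1:ℝ)^k * (E2 (n+1) k : ℝ))
  simpa [mul_assoc, Nat.add_sub_cancel] using h

lemma hasDerivAt_Qf (n : ℕ) (x : ℝ) : HasDerivAt (fun y => Qf n y) (Qp n x) x := by
  unfold Qf Qp
  refine HasDerivAt.fun_sum fun k _ => ?_
  have hp : HasDerivAt (fun y : ℝ => (1+y)^(n+1-k))
      (((n+1-k : ℕ):ℝ) * (1+x)^(n+1-k-1) * 1) x := (hasDerivAt_one_add x).pow _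
  have h := ((hasDerivAt_id x).mul hp).const_mul ((-1:ℝ)^(n+k+1) * (dAssoc (n+k+1) k : ℝ))
  have he : n+1-k-1 = n-k := by omega
  rw [he] at h
  simpa [mul_assoc, mul_comm, mul_left_comm] using h

lemma hasDerivAt_Rf (n : ℕ) (x : ℝ) : HasDerivAt (fun y => Rf n y) (Rp n x) x := by
  unfold Rf Rp
  refine HasDerivAt.fun_sum fun k _ => ?_
  have hp : HasDerivAt (fun y : ℝ => (1+y)^(n+1-k))
      (((n+1-k : ℕ):ℝ) * (1+x)^(n+1-k-1) * 1) x := (hasDerivAt_one_add x).pow _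
  have h := ((hasDerivAt_pow k x).mul hp).const_mul ((-1:ℝ)^(k+1) * (S2 (n+k+1) k : ℝ))
  have he : n+1-k-1 = n-k := by omega
  rw [he] at h
  simpa [mul_assoc, mul_comm, mul_left_comm] using h

lemma RN (n : ℕ) (x : ℝ) :
    Nf (n+1) x = x*(1+x) * Np n x - (2*(n:ℝ)+3) * x * Nf n x := by
  have L : Nf (n+1) x
      = (∑ k ∈ Finset.range (n+1),
          (-1:ℝ)^(k+1) * (((k:ℝ)+2) * (E2 (n+1) (k+1) : ℝ)) * x^(k+2))
        + (∑ k ∈ Finset.range (n+2),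
          (-1:ℝ)^(k+1) * ((2*(n:ℝ)+2-(k:ℝ)) * (E2 (n+1) k : ℝ)) * x^(k+2))
        + (E2 (n+1) 0 : ℝ) * x := by
    unfold Nf
    rw [show n+1+2 = n+2+1 from rfl, Finset.sum_range_succ']
    have h1 : ∑ k ∈ Finset.range (n+2), (-1:ℝ)^(k+1) * (E2 (n+1+1) (k+1) : ℝ) * x^(k+1+1)
        = ∑ k ∈ Finset.range (n+2),
            ((-1:ℝ)^(k+1) * (((k:ℝ)+2) * (E2 (n+1) (k+1):ℝ)) * x^(k+2)
            + (-1:ℝ)^(k+1) * ((2*(n:ℝ)+2-(k:ℝ)) * (E2 (n+1) k:ℝ)) * x^(k+2)) := by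
      refine Finset.sum_congr rfl fun k hk => ?_
      have hk2 : k ≤ 2*(n+1) := by have := Finset.mem_range.mp hk; omega
      rw [E2_succ]
      push_cast [Nat.cast_sub hk2]
      ring
    rw [h1, Finset.sum_add_distrib, Finset.sum_range_succ]
    rw [E2_zero n (n+1) (by omega)]
    have h0 : E2 (n+1+1) 0 = E2 (n+1) 0 := rfl
    rw [h0]
    push_cast
    ring
  have R : x*(1+x) * Np n x - (2*(n:ℝ)+3) * x * Nf n x
      = (∑ k ∈ Finset.range (n+1),
          (-1:ℝ)^(k+1) * (((k:ℝ)+2) * (E2 (n+1) (k+1) : ℝ)) * x^(k+2))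
        + (∑ k ∈ Finset.range (n+2),
          (-1:ℝ)^(k+1) * ((2*(n:ℝ)+2-(k:ℝ)) * (E2 (n+1) k : ℝ)) * x^(k+2))
        + (E2 (n+1) 0 : ℝ) * x := by
    unfold Nf Np
    rw [Finset.mul_sum, Finset.mul_sum, ← Finset.sum_sub_distrib]
    have h2 : ∑ k ∈ Finset.range (n+2),
        (x*(1+x) * ((-1:ℝ)^k * (E2 (n+1) k : ℝ) * (((k:ℝ)+1) * x^k))
          - (2*(n:ℝ)+3)*x*((-1:ℝ)^k * (E2 (n+1) k : ℝ) * x^(k+1)))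
      = ∑ k ∈ Finset.range (n+2),
          ((-1:ℝ)^k * (((k:ℝ)+1) * (E2 (n+1) k : ℝ)) * x^(k+1)
          + (-1:ℝ)^(k+1) * ((2*(n:ℝ)+2-(k:ℝ)) * (E2 (n+1) k : ℝ)) * x^(k+2)) := by
      refine Finset.sum_congr rfl fun k _ => ?_
      ring
    rw [h2, Finset.sum_add_distrib, Finset.sum_range_succ']
    have h3 : ∑ k ∈ Finset.range (n+1),
        (-1:ℝ)^(k+1) * (((((k+1:ℕ)):ℝ)+1) * (E2 (n+1) (k+1) : ℝ)) * x^(k+1+1)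
      = ∑ k ∈ Finset.range (n+1),
        (-1:ℝ)^(k+1) * (((k:ℝ)+2) * (E2 (n+1) (k+1) : ℝ)) * x^(k+2) := by
      refine Finset.sum_congr rfl fun k _ => ?_
      push_cast
      ring
    rw [h3]
    push_cast
    ring
  rw [L, R]

lemma RQ (n : ℕ) (x : ℝ) :
    Qf (n+1) x = x*(1+x) * Qp n x - (2*(n:ℝ)+3) * x * Qf n x := by
  have L : Qf (n+1) x
      = (∑ k ∈ Finset.range (n+1),
          (-1:ℝ)^(n+k+1) * (((n:ℝ)+(k:ℝ)+2) * (dAssoc (n+k+2) (k+1):ℝ)) * (x*(1+x)^(n+1-k)))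
        + (∑ k ∈ Finset.range (n+2),
          (-1:ℝ)^(n+k+1) * (((n:ℝ)+(k:ℝ)+2) * (dAssoc (n+k+1) k:ℝ)) * (x*(1+x)^(n+1-k))) := by
    unfold Qf
    rw [show n+1+2 = n+2+1 from rfl, Finset.sum_range_succ']
    have h1 : ∑ k ∈ Finset.range (n+2),
        (-1:ℝ)^(n+1+(k+1)+1) * (dAssoc (n+1+(k+1)+1) (k+1) : ℝ) * (x*(1+x)^(n+1+1-(k+1)))
      = ∑ k ∈ Finset.range (n+2),
          ((-1:ℝ)^(n+k+1) * (((n:ℝ)+(k:ℝ)+2) * (dAssoc (n+k+2) (k+1):ℝ)) * (x*(1+x)^(n+1-k))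
          + (-1:ℝ)^(n+k+1) * (((n:ℝ)+(k:ℝ)+2) * (dAssoc (n+k+1) k:ℝ)) * (x*(1+x)^(n+1-k))) := by
      refine Finset.sum_congr rfl fun k hk => ?_
      rw [show n+1+(k+1)+1 = (n+k+1)+2 from by omega, dAssoc_succ,
        show n+1+1-(k+1) = n+1-k from by omega]
      push_cast
      ring
    rw [h1, Finset.sum_add_distrib, Finset.sum_range_succ,
      dAssoc_zero (n+(n+1)+2) ((n+1)+1) (by omega),
      show n+1+0+1 = n+2 from by omega, dAssoc_zero_r (n+1)]
    push_cast
    ring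
  have R : x*(1+x) * Qp n x - (2*(n:ℝ)+3) * x * Qf n x
      = (∑ k ∈ Finset.range (n+1),
          (-1:ℝ)^(n+k+1) * (((n:ℝ)+(k:ℝ)+2) * (dAssoc (n+k+2) (k+1):ℝ)) * (x*(1+x)^(n+1-k)))
        + (∑ k ∈ Finset.range (n+2),
          (-1:ℝ)^(n+k+1) * (((n:ℝ)+(k:ℝ)+2) * (dAssoc (n+k+1) k:ℝ)) * (x*(1+x)^(n+1-k))) := by
    unfold Qf Qp
    rw [Finset.mul_sum, Finset.mul_sum, ← Finset.sum_sub_distrib]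
    have h2 : ∑ k ∈ Finset.range (n+2),
        (x*(1+x) * ((-1:ℝ)^(n+k+1) * (dAssoc (n+k+1) k : ℝ) *
            ((1+x)^(n+1-k) + x * (((n+1-k : ℕ):ℝ) * (1+x)^(n-k))))
          - (2*(n:ℝ)+3)*x*((-1:ℝ)^(n+k+1) * (dAssoc (n+k+1) k : ℝ) * (x*(1+x)^(n+1-k))))
      = ∑ k ∈ Finset.range (n+2),
          ((-1:ℝ)^(n+k+2) * (((n:ℝ)+(k:ℝ)+1) * (dAssoc (n+k+1) k:ℝ)) * (x*(1+x)^(n+2-k))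
          + (-1:ℝ)^(n+k+1) * (((n:ℝ)+(k:ℝ)+2) * (dAssoc (n+k+1) k:ℝ)) * (x*(1+x)^(n+1-k))) := by
      refine Finset.sum_congr rfl fun k hk => ?_
      have hk' : k ≤ n+1 := by have := Finset.mem_range.mp hk; omega
      by_cases hkn : k ≤ n
      · rw [show n+1-k = (n-k)+1 from by omega, show n+2-k = (n-k)+2 from by omega]
        push_cast [Nat.cast_sub hkn]
        ring
      · have hk1 : k = n+1 := by omega
        subst hk1
        rw [show n+1-(n+1) = 0 from by omega, show n-(n+1) = 0 from by omega,
          show n+2-(n+1) = 1 from by omega]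
        push_cast
        ring
    rw [h2, Finset.sum_add_distrib, Finset.sum_range_succ']
    have h3 : ∑ k ∈ Finset.range (n+1),
        (-1:ℝ)^(n+(k+1)+2) * (((n:ℝ)+((k+1:ℕ):ℝ)+1) * (dAssoc (n+(k+1)+1) (k+1):ℝ)) * (x*(1+x)^(n+2-(k+1)))
      = ∑ k ∈ Finset.range (n+1),
          (-1:ℝ)^(n+k+1) * (((n:ℝ)+(k:ℝ)+2) * (dAssoc (n+k+2) (k+1):ℝ)) * (x*(1+x)^(n+1-k)) := by
      refine Finset.sum_congr rfl fun k _ => ?_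
      rw [show n+2-(k+1) = n+1-k from by omega, show n+(k+1)+1 = n+k+2 from by omega]
      push_cast
      ring
    rw [h3, show n+0+1 = n+1 from by omega, dAssoc_zero_r n]
    push_cast
    ring
  rw [L, R]

lemma RR (n : ℕ) (x : ℝ) :
    Rf (n+1) x = x*(1+x) * Rp n x - (2*(n:ℝ)+3) * x * Rf n x := by
  have L : Rf (n+1) x
      = (∑ k ∈ Finset.range (n+1),
          (-1:ℝ)^k * (((k:ℝ)+1) * (S2 (n+k+2) (k+1):ℝ)) * (x^(k+1)*(1+x)^(n+1-k)))
        + (∑ k ∈ Finset.range (n+2),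
          (-1:ℝ)^k * (((n:ℝ)+(k:ℝ)+2) * (S2 (n+k+1) k:ℝ)) * (x^(k+1)*(1+x)^(n+1-k))) := by
    unfold Rf
    rw [show n+1+2 = n+2+1 from rfl, Finset.sum_range_succ']
    have h1 : ∑ k ∈ Finset.range (n+2),
        (-1:ℝ)^(k+1+1) * (S2 (n+1+(k+1)+1) (k+1) : ℝ) * (x^(k+1)*(1+x)^(n+1+1-(k+1)))
      = ∑ k ∈ Finset.range (n+2),
          ((-1:ℝ)^k * (((k:ℝ)+1) * (S2 (n+k+2) (k+1):ℝ)) * (x^(k+1)*(1+x)^(n+1-k))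
          + (-1:ℝ)^k * (((n:ℝ)+(k:ℝ)+2) * (S2 (n+k+1) k:ℝ)) * (x^(k+1)*(1+x)^(n+1-k))) := by
      refine Finset.sum_congr rfl fun k hk => ?_
      rw [show n+1+(k+1)+1 = (n+k+1)+2 from by omega, S2_succ,
        show n+1+1-(k+1) = n+1-k from by omega]
      push_cast
      ring
    rw [h1, Finset.sum_add_distrib, Finset.sum_range_succ,
      S2_zero (n+(n+1)+2) ((n+1)+1) (by omega),
      show n+1+0+1 = (n+1)+1 from by omega, S2_zero_r (n+1)]
    push_cast
    ring
  have R : x*(1+x) * Rp n x - (2*(n:ℝ)+3) * x * Rf n x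
      = (∑ k ∈ Finset.range (n+1),
          (-1:ℝ)^k * (((k:ℝ)+1) * (S2 (n+k+2) (k+1):ℝ)) * (x^(k+1)*(1+x)^(n+1-k)))
        + (∑ k ∈ Finset.range (n+2),
          (-1:ℝ)^k * (((n:ℝ)+(k:ℝ)+2) * (S2 (n+k+1) k:ℝ)) * (x^(k+1)*(1+x)^(n+1-k))) := by
    unfold Rf Rp
    rw [Finset.mul_sum, Finset.mul_sum, ← Finset.sum_sub_distrib]
    have h2 : ∑ k ∈ Finset.range (n+2),
        (x*(1+x) * ((-1:ℝ)^(k+1) * (S2 (n+k+1) k : ℝ) *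
            (((k:ℝ) * x^(k-1)) * (1+x)^(n+1-k) + x^k * (((n+1-k:ℕ):ℝ) * (1+x)^(n-k))))
          - (2*(n:ℝ)+3)*x*((-1:ℝ)^(k+1) * (S2 (n+k+1) k : ℝ) * (x^k*(1+x)^(n+1-k))))
      = ∑ k ∈ Finset.range (n+2),
          ((-1:ℝ)^(k+1) * ((k:ℝ) * (S2 (n+k+1) k:ℝ)) * (x^k*(1+x)^(n+2-k))
          + (-1:ℝ)^k * (((n:ℝ)+(k:ℝ)+2) * (S2 (n+k+1) k:ℝ)) * (x^(k+1)*(1+x)^(n+1-k))) := by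
      refine Finset.sum_congr rfl fun k hk => ?_
      have hk' : k ≤ n+1 := by have := Finset.mem_range.mp hk; omega
      by_cases hk0 : k = 0
      · subst hk0
        rw [show n+0+1 = n+1 from by omega, S2_zero_r n]
        push_cast
        ring
      · obtain ⟨j, rfl⟩ : ∃ j, k = j+1 := ⟨k-1, by omega⟩
        by_cases hkn : j+1 ≤ n
        · rw [show n+1-(j+1) = (n-(j+1))+1 from by omega,
            show n+2-(j+1) = (n-(j+1))+2 from by omega,
            show j+1-1 = j from by omega]
          push_cast [Nat.cast_sub (show j+1 ≤ n from hkn), Nat.cast_sub (show 1+j ≤ n from by omega),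
            Nat.cast_sub (show j+1 ≤ n+1 from by omega), Nat.cast_sub (show 1+j ≤ n+1 from by omega)]
          ring
        · simp only [show j = n from by omega]
          rw [show n+1-(n+1) = 0 from by omega, show n-(n+1) = 0 from by omega,
            show n+2-(n+1) = 1 from by omega, show n+1-1 = n from by omega]
          push_cast
          ring
    rw [h2, Finset.sum_add_distrib, Finset.sum_range_succ']
    have h3 : ∑ k ∈ Finset.range (n+1),
        (-1:ℝ)^(k+1+1) * (((k+1:ℕ):ℝ) * (S2 (n+(k+1)+1) (k+1):ℝ)) * (x^(k+1)*(1+x)^(n+2-(k+1)))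
      = ∑ k ∈ Finset.range (n+1),
          (-1:ℝ)^k * (((k:ℝ)+1) * (S2 (n+k+2) (k+1):ℝ)) * (x^(k+1)*(1+x)^(n+1-k)) := by
      refine Finset.sum_congr rfl fun k _ => ?_
      rw [show n+2-(k+1) = n+1-k from by omega, show n+(k+1)+1 = n+k+2 from by omega]
      push_cast
      ring
    rw [h3]
    push_cast
    ring
  rw [L, R]

lemma NQR : ∀ n : ℕ, (∀ x : ℝ, Nf n x = Qf n x) ∧ (∀ x : ℝ, Nf n x = Rf n x) := by
  intro n
  induction n with
  | zero =>
    constructor <;> intro x <;>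
      simp [Nf, Qf, Rf, Finset.sum_range_succ, E2, dAssoc, S2]
  | succ n ih =>
    obtain ⟨ihQ, ihR⟩ := ih
    have hfQ : Nf n = Qf n := funext ihQ
    have hfR : Nf n = Rf n := funext ihR
    constructor <;> intro x
    · have hd : Np n x = Qp n x := by
        have h1 := (hasDerivAt_Nf n x).deriv
        have h2 := (hasDerivAt_Qf n x).deriv
        rw [← h1, ← h2, hfQ]
      rw [RN, RQ, hd, ihQ x]
    · have hd : Np n x = Rp n x := by
        have h1 := (hasDerivAt_Nf n x).deriv
        have h2 := (hasDerivAt_Rf n x).deriv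
        rw [← h1, ← h2, hfR]
      rw [RN, RR, hd, ihR x]

/-- with `ω₀` the Omega constant (`ω₀·exp ω₀ = 1`), for `n ≥ 2` the three
numbers `A_n`, `B_n`, `C_n` (the three representations of `n!` times the `n`-th Taylor
coefficient of `W(e^t)` at `t = 0`) are equal. -/
theorem stmt_18 (ω : ℝ) (hω : ω * Real.exp ω = 1) (n : ℕ) (hn : 2 ≤ n) :
    (1 / (1 + ω) ^ (2 * n - 1)) *
        ∑ k ∈ Finset.range n, (E2 (n - 1) k : ℝ) * (-1) ^ k * ω ^ (k + 1)
      = ω * ∑ k ∈ Finset.range n,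
          (-1 : ℝ) ^ (n + k - 1) * (dAssoc (n + k - 1) k : ℝ) / (1 + ω) ^ (n + k) ∧
    (1 / (1 + ω) ^ (2 * n - 1)) *
        ∑ k ∈ Finset.range n, (E2 (n - 1) k : ℝ) * (-1) ^ k * ω ^ (k + 1)
      = ∑ k ∈ Finset.range n,
          (S2 (n + k - 1) k : ℝ) * (-1) ^ (k + 1) * ω ^ k / (1 + ω) ^ (n + k) := by
  have hω0 : 0 < ω := by
    by_contra h
    push_neg at h
    nlinarith [Real.exp_pos ω]
  have h1 : (0:ℝ) < 1 + ω := by linarith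
  obtain ⟨m, rfl⟩ : ∃ m, n = m + 2 := ⟨n - 2, by omega⟩
  obtain ⟨hQ, hR⟩ := NQR m
  have hpow : ∀ j : ℕ, ((1+ω):ℝ)^j ≠ 0 := fun j => pow_ne_zero j (by linarith)
  have e1 : ∑ k ∈ Finset.range (m+2), (E2 (m+2-1) k : ℝ) * (-1)^k * ω^(k+1) = Nf m ω := by
    unfold Nf
    exact Finset.sum_congr rfl fun k _ => by rw [show m+2-1 = m+1 from rfl]; ring
  constructor
  · have e2 : ω * ∑ k ∈ Finset.range (m+2),
        (-1:ℝ)^(m+2+k-1) * (dAssoc (m+2+k-1) k : ℝ) / (1+ω)^(m+2+k)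
        = Qf m ω / (1+ω)^(2*(m+2)-1) := by
      unfold Qf
      rw [Finset.mul_sum, Finset.sum_div]
      refine Finset.sum_congr rfl fun k hk => ?_
      have hk' : k ≤ m+1 := by have := Finset.mem_range.mp hk; omega
      rw [show m+2+k-1 = m+k+1 from by omega,
        show 2*(m+2)-1 = (m+2+k)+(m+1-k) from by omega, pow_add]
      have h2 := hpow (m+2+k)
      have h3 := hpow (m+1-k)
      field_simp
      ring
    rw [e1, e2, hQ ω]
    ring
  · have e3 : ∑ k ∈ Finset.range (m+2),
        (S2 (m+2+k-1) k : ℝ) * (-1:ℝ)^(k+1) * ω^k / (1+ω)^(m+2+k)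
        = Rf m ω / (1+ω)^(2*(m+2)-1) := by
      unfold Rf
      rw [Finset.sum_div]
      refine Finset.sum_congr rfl fun k hk => ?_
      have hk' : k ≤ m+1 := by have := Finset.mem_range.mp hk; omega
      rw [show m+2+k-1 = m+k+1 from by omega,
        show 2*(m+2)-1 = (m+2+k)+(m+1-k) from by omega, pow_add]
      have h2 := hpow (m+2+k)
      have h3 := hpow (m+1-k)
      field_simp
      ring
    rw [e1, e3, hR ω]
    ring
end
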